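/- Let h be a log-concave probability density on ℝ with median w and mean μ, and suppose ∫ₓ^∞ h = ν with ν ∈ (0, 1/6). Then ∫ₓ^∞ (t − μ)² h(t) dt ≤ (5ν/(4 h(w)²))·(ln ν)². -/

import Mathlib

open MeasureTheory Set

def LogConcaveFn (h : ℝ → ℝ) : Prop :=
  (∀ x, 0 ≤ h x) ∧
  ∀ x y l : ℝ, 0 < l → l < 1 → h x ^ (1 - l) * h y ^ l ≤ h ((1 - l) * x + l * y)

lemma integrable_comp_add {g : ℝ → ℝ} (hg : Integrable g) (d : ℝ) :
    Integrable fun x => g (x + d) :=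
  (measurePreserving_add_right volume d).integrable_comp_emb
    (MeasurableEquiv.addRight d).measurableEmbedding |>.mpr hg

lemma measurePreserving_reflect (a : ℝ) :
    MeasurePreserving (fun t : ℝ => a - t) volume volume := by
  have h1 : MeasurePreserving (fun t : ℝ => -t) volume volume :=
    Measure.measurePreserving_neg volume
  have h2 := (measurePreserving_add_left volume a).comp h1
  simpa [Function.comp_def, sub_eq_add_neg] using h2

lemma integrable_comp_reflect {g : ℝ → ℝ} (hg : Integrable g) (a : ℝ) :
    Integrable fun x => g (a - x) :=
  (measurePreserving_reflect a).integrable_comp_emb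
    (MeasurableEquiv.subLeft a).measurableEmbedding |>.mpr hg

lemma integral_Ioi_comp_add (g : ℝ → ℝ) (q d : ℝ) :
    (∫ x in Set.Ioi q, g (x + d)) = ∫ x in Set.Ioi (q + d), g x := by
  rw [← integral_indicator measurableSet_Ioi, ← integral_indicator measurableSet_Ioi,
    ← integral_add_right_eq_self ((Set.Ioi (q + d)).indicator g) d]
  congr 1
  funext y
  by_cases hy : q < y
  · rw [Set.indicator_of_mem (Set.mem_Ioi.mpr hy),
      Set.indicator_of_mem (Set.mem_Ioi.mpr (by linarith : q + d < y + d))]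
  · rw [Set.indicator_of_notMem (by simpa using hy),
      Set.indicator_of_notMem (by simp only [Set.mem_Ioi, not_lt]; linarith [not_lt.mp hy])]

lemma integral_Iic_comp_add (g : ℝ → ℝ) (q d : ℝ) :
    (∫ x in Set.Iic q, g (x + d)) = ∫ x in Set.Iic (q + d), g x := by
  rw [← integral_indicator measurableSet_Iic, ← integral_indicator measurableSet_Iic,
    ← integral_add_right_eq_self ((Set.Iic (q + d)).indicator g) d]
  congr 1
  funext y
  by_cases hy : y ≤ q
  · rw [Set.indicator_of_mem (Set.mem_Iic.mpr hy),
      Set.indicator_of_mem (Set.mem_Iic.mpr (by linarith : y + d ≤ q + d))]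
  · rw [Set.indicator_of_notMem (by simpa using hy),
      Set.indicator_of_notMem (by simp only [Set.mem_Iic, not_le]; linarith [not_le.mp hy])]

lemma lc_supermod {h : ℝ → ℝ} (hlc : LogConcaveFn h) (s t u : ℝ) (hst : s ≤ t) (hu : 0 ≤ u) :
    h s * h (t + u) ≤ h t * h (s + u) := by
  obtain ⟨hnn, hcc⟩ := hlc
  rcases eq_or_lt_of_le hst with rfl | hst
  · exact le_rfl
  rcases eq_or_lt_of_le hu with rfl | hu
  · simp [mul_comm]
  rcases eq_or_lt_of_le (hnn s) with hs0 | hs0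
  · calc h s * h (t + u) = 0 := by rw [← hs0, zero_mul]
      _ ≤ _ := mul_nonneg (hnn t) (hnn _)
  rcases eq_or_lt_of_le (hnn (t + u)) with htu0 | htu0
  · calc h s * h (t + u) = 0 := by rw [← htu0, mul_zero]
      _ ≤ _ := mul_nonneg (hnn t) (hnn _)
  set l : ℝ := (t - s) / (t - s + u) with hl
  have hD : 0 < t - s + u := by linarith
  have hl0 : 0 < l := div_pos (by linarith) hD
  have hl1 : l < 1 := (div_lt_one hD).mpr (by linarith)
  have hD' : t - s + u ≠ 0 := ne_of_gt hD
  have e1 : (1 - l) * s + l * (t + u) = t := by rw [hl]; field_simp; ring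
  have e2 : (1 - l) * (t + u) + l * s = s + u := by rw [hl]; field_simp; ring
  have i1 := hcc s (t + u) l hl0 hl1
  have i2 := hcc (t + u) s l hl0 hl1
  rw [e1] at i1
  rw [e2] at i2
  have key : h s * h (t + u) = (h s ^ (1 - l) * h (t + u) ^ l) * (h (t + u) ^ (1 - l) * h s ^ l) := by
    rw [show (h s ^ (1 - l) * h (t + u) ^ l) * (h (t + u) ^ (1 - l) * h s ^ l)
        = (h s ^ (1 - l) * h s ^ l) * (h (t + u) ^ (1 - l) * h (t + u) ^ l) by ring,
      ← Real.rpow_add hs0, ← Real.rpow_add htu0]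
    norm_num
  rw [key]
  exact mul_le_mul i1 i2 (by positivity) (hnn t)

lemma lc_pos_between {h : ℝ → ℝ} (hlc : LogConcaveFn h) {p q r : ℝ}
    (hpq : p < q) (hqr : q < r) (hp : 0 < h p) (hr : 0 < h r) : 0 < h q := by
  obtain ⟨hnn, hcc⟩ := hlc
  set l : ℝ := (q - p) / (r - p) with hl
  have hrp : 0 < r - p := by linarith
  have hl0 : 0 < l := div_pos (by linarith) hrp
  have hl1 : l < 1 := (div_lt_one hrp).mpr (by linarith)
  have e : (1 - l) * p + l * r = q := by rw [hl]; field_simp; ring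
  have := hcc p r l hl0 hl1
  rw [e] at this
  calc (0:ℝ) < h p ^ (1 - l) * h r ^ l := by positivity
  _ ≤ h q := this

lemma lc_continuousOn {h : ℝ → ℝ} (hlc : LogConcaveFn h) {p r : ℝ}
    (hp : 0 < h p) (hr : 0 < h r) : ContinuousOn h (Set.Ioo p r) := by
  rcases le_or_gt r p with hrp | hpr
  · rw [Set.Ioo_eq_empty (not_lt.mpr hrp)]
    exact continuousOn_empty h
  have hpos : ∀ q ∈ Set.Ioo p r, 0 < h q := fun q hq => lc_pos_between hlc hq.1 hq.2 hp hr
  have hconc : ConcaveOn ℝ (Set.Ioo p r) (fun t => Real.log (h t)) := by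
    refine ⟨convex_Ioo p r, fun a ha b hb va vb hva hvb hvab => ?_⟩
    rcases eq_or_lt_of_le hva with h0 | hva
    · have : vb = 1 := by linarith
      simp [← h0, this]
    rcases eq_or_lt_of_le hvb with h0 | hvb
    · have : va = 1 := by linarith
      simp [← h0, this]
    have := hlc.2 a b vb (by linarith) (by linarith)
    have hva1 : va = 1 - vb := by linarith
    rw [← hva1] at this
    have hla : 0 < h a := hpos a ha
    have hlb : 0 < h b := hpos b hb
    have hsm : va • a + vb • b ∈ Set.Ioo p r :=
      (convex_Ioo p r) ha hb hva.le hvb.le hvab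
    calc va • Real.log (h a) + vb • Real.log (h b)
        = Real.log (h a ^ va * h b ^ vb) := by
          rw [Real.log_mul (by positivity) (by positivity),
            Real.log_rpow hla, Real.log_rpow hlb]; simp [smul_eq_mul]
      _ ≤ Real.log (h (va • a + vb • b)) := by
          apply Real.log_le_log (by positivity)
          simpa [hva1, smul_eq_mul] using this
  have hlog : ContinuousOn (fun t => Real.log (h t)) (Set.Ioo p r) :=
    hconc.continuousOn isOpen_Ioo
  have : ContinuousOn (fun t => Real.exp (Real.log (h t))) (Set.Ioo p r) :=
    Real.continuous_exp.comp_continuousOn hlog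
  exact this.congr fun t ht => (Real.exp_log (hpos t ht)).symm

noncomputable def tailInt (h : ℝ → ℝ) (p : ℝ) : ℝ := ∫ s in Set.Ioi p, h s

lemma tailInt_nonneg {h : ℝ → ℝ} (hnn : ∀ x, 0 ≤ h x) (p : ℝ) : 0 ≤ tailInt h p :=
  setIntegral_nonneg measurableSet_Ioi fun s _ => hnn s

lemma tailInt_split {h : ℝ → ℝ} (hi : Integrable h) {p q : ℝ} (hpq : p ≤ q) :
    tailInt h p = (∫ s in Set.Ioc p q, h s) + tailInt h q := by
  have hd : Disjoint (Set.Ioc p q) (Set.Ioi q) := by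
    rw [Set.disjoint_left]
    rintro a ⟨_, h1⟩ h2
    exact absurd h2 (not_lt.mpr h1)
  rw [tailInt, tailInt, ← Set.Ioc_union_Ioi_eq_Ioi hpq,
    setIntegral_union hd measurableSet_Ioi hi.integrableOn hi.integrableOn]

lemma tailInt_anti {h : ℝ → ℝ} (hi : Integrable h) (hnn : ∀ x, 0 ≤ h x) {p q : ℝ}
    (hpq : p ≤ q) : tailInt h q ≤ tailInt h p := by
  rw [tailInt_split hi hpq]
  have : 0 ≤ ∫ s in Set.Ioc p q, h s := setIntegral_nonneg measurableSet_Ioc fun s _ => hnn s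
  linarith

lemma tailInt_eq_sub {h : ℝ → ℝ} (hi : Integrable h) (x₀ p : ℝ) :
    tailInt h p = tailInt h x₀ - ∫ s in x₀..p, h s := by
  rcases le_total x₀ p with hle | hle
  · rw [intervalIntegral.integral_of_le hle, tailInt_split hi hle]
    ring
  · rw [intervalIntegral.integral_of_ge hle, tailInt_split hi hle]
    ring

lemma tailInt_continuous {h : ℝ → ℝ} (hi : Integrable h) : Continuous (tailInt h) := by
  have heq : tailInt h = fun p => tailInt h 0 - ∫ s in (0:ℝ)..p, h s := by
    funext p; exact tailInt_eq_sub hi 0 p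
  rw [heq]
  exact continuous_const.sub
    (intervalIntegral.continuous_primitive (fun a b => hi.intervalIntegrable) 0)

lemma tailInt_hasDerivAt {h : ℝ → ℝ} (hi : Integrable h) {s : Set ℝ} (hs : IsOpen s)
    (hcont : ContinuousOn h s) {p : ℝ} (hp : p ∈ s) :
    HasDerivAt (tailInt h) (-(h p)) p := by
  have hD : HasDerivAt (fun u => ∫ t in p..u, h t) (h p) p :=
    intervalIntegral.integral_hasDerivAt_right hi.intervalIntegrable
      (hcont.stronglyMeasurableAtFilter hs p hp) (hcont.continuousAt (hs.mem_nhds hp))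
  have : HasDerivAt (fun u => tailInt h p - ∫ t in p..u, h t) (-(h p)) p := hD.const_sub _
  convert this using 1
  funext u
  exact tailInt_eq_sub hi p u

lemma exists_pos_of_tail_pos {h : ℝ → ℝ} (hnn : ∀ x, 0 ≤ h x) {t : ℝ}
    (ht : 0 < tailInt h t) : ∃ s, t < s ∧ 0 < h s := by
  by_contra hc
  push_neg at hc
  have : tailInt h t = 0 := by
    rw [tailInt]
    rw [setIntegral_congr_fun measurableSet_Ioi
      (fun s hs => le_antisymm (hc s hs) (hnn s) : Set.EqOn h (fun _ => (0:ℝ)) (Set.Ioi t))]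
    simp
  rw [this] at ht
  exact lt_irrefl 0 ht

lemma hazard_le {h : ℝ → ℝ} (hlc : LogConcaveFn h) (hi : Integrable h) {p q : ℝ}
    (hpq : p ≤ q) : h p * tailInt h q ≤ h q * tailInt h p := by
  have hnn := hlc.1
  have step1 : h p * tailInt h q = ∫ s in Set.Ioi q, h p * h s := by
    rw [tailInt, integral_const_mul]
  have key : ∀ s ∈ Set.Ioi q, h p * h s ≤ h q * h (s + (p - q)) := by
    intro s hs
    have hsq : (0:ℝ) ≤ s - q := by have := Set.mem_Ioi.mp hs; linarith
    have := lc_supermod hlc p q (s - q) hpq hsq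
    have e1 : q + (s - q) = s := by ring
    have e2 : p + (s - q) = s + (p - q) := by ring
    rwa [e1, e2] at this
  have int1 : IntegrableOn (fun s => h p * h s) (Set.Ioi q) :=
    (hi.integrableOn).const_mul _
  have int2 : IntegrableOn (fun s => h q * h (s + (p - q))) (Set.Ioi q) :=
    ((integrable_comp_add hi (p - q)).integrableOn).const_mul _
  calc h p * tailInt h q = ∫ s in Set.Ioi q, h p * h s := step1
    _ ≤ ∫ s in Set.Ioi q, h q * h (s + (p - q)) :=
        setIntegral_mono_on int1 int2 measurableSet_Ioi key
    _ = h q * ∫ s in Set.Ioi q, h (s + (p - q)) := integral_const_mul _ _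
    _ = h q * ∫ s in Set.Ioi (q + (p - q)), h s := by rw [integral_Ioi_comp_add]
    _ = h q * tailInt h p := by rw [show q + (p - q) = p by ring, tailInt]

lemma tail_exp_bound {h : ℝ → ℝ} {w : ℝ} (hlc : LogConcaveFn h) (hi : Integrable h)
    (hwpos : 0 < h w) (hGw : tailInt h w = 1 / 2) {x₀ t : ℝ}
    (hwx : w ≤ x₀) (hxt : x₀ ≤ t) :
    tailInt h t ≤ tailInt h x₀ * Real.exp (-(2 * h w) * (t - x₀)) := by
  have hnn := hlc.1
  rcases eq_or_lt_of_le hxt with rfl | hxt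
  · simp
  rcases eq_or_lt_of_le (tailInt_nonneg hnn t) with h0 | hGt
  · rw [← h0]
    exact mul_nonneg (tailInt_nonneg hnn x₀) (Real.exp_pos _).le
  obtain ⟨s₀, hts₀, hs₀⟩ := exists_pos_of_tail_pos hnn hGt
  have hcont : ContinuousOn h (Set.Ioo w s₀) := lc_continuousOn hlc hwpos hs₀
  set c := 2 * h w with hc
  have hsub : Set.Ioo x₀ t ⊆ Set.Ioo w s₀ := fun p hp =>
    ⟨lt_of_le_of_lt hwx hp.1, lt_trans hp.2 hts₀⟩
  have hψder : ∀ p ∈ Set.Ioo x₀ t, HasDerivAt (fun u => tailInt h u * Real.exp (c * u))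
      (-(h p) * Real.exp (c * p) + tailInt h p * (Real.exp (c * p) * c)) p := by
    intro p hp
    have hGder : HasDerivAt (tailInt h) (-(h p)) p :=
      tailInt_hasDerivAt hi isOpen_Ioo hcont (hsub hp)
    have hEder : HasDerivAt (fun u => Real.exp (c * u)) (Real.exp (c * p) * c) p := by
      have h1 : HasDerivAt (fun u : ℝ => c * u) c p := by
        simpa using (hasDerivAt_id p).const_mul c
      have := (Real.hasDerivAt_exp (c * p)).comp p h1
      simpa [Function.comp_def] using this
    exact hGder.mul hEder
  have hψcont : ContinuousOn (fun u => tailInt h u * Real.exp (c * u)) (Set.Icc x₀ t) :=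
    ((tailInt_continuous hi).mul (Real.continuous_exp.comp (continuous_const.mul
      continuous_id))).continuousOn
  have hanti : AntitoneOn (fun u => tailInt h u * Real.exp (c * u)) (Set.Icc x₀ t) := by
    apply antitoneOn_of_deriv_nonpos (convex_Icc x₀ t) hψcont
    · intro p hp
      rw [interior_Icc] at hp
      exact (hψder p hp).differentiableAt.differentiableWithinAt
    · intro p hp
      rw [interior_Icc] at hp
      rw [(hψder p hp).deriv]
      have hpw : w ≤ p := le_trans hwx (le_of_lt hp.1)
      have hhaz := hazard_le hlc hi hpw
      rw [hGw] at hhaz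
      have hcG : c * tailInt h p ≤ h p := by
        rw [hc]; nlinarith
      nlinarith [Real.exp_pos (c * p), tailInt_nonneg hnn p]
  have := hanti (Set.left_mem_Icc.mpr (le_of_lt hxt)) (Set.right_mem_Icc.mpr (le_of_lt hxt))
    (le_of_lt hxt)
  have hstep : tailInt h t * Real.exp (c * t) ≤ tailInt h x₀ * Real.exp (c * x₀) := this
  have hrw : -(2 * h w) * (t - x₀) = c * x₀ - c * t := by rw [hc]; ring
  rw [hrw, Real.exp_sub, mul_div_assoc' , le_div_iff₀ (Real.exp_pos _)]
  linarith

lemma tail_moment_key {h : ℝ → ℝ} {w : ℝ} (hlc : LogConcaveFn h) (hi : Integrable h)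
    (hwpos : 0 < h w) {x₀ : ℝ} (hwx : w ≤ x₀) (φ φ' : ℝ → ℝ)
    (hφd : ∀ p, HasDerivAt φ (φ' p) p) (hφ'c : Continuous φ')
    (hφnn : ∀ p, x₀ ≤ p → 0 ≤ φ p)
    (hint : IntegrableOn (fun t => φ t * h t) (Set.Ioi x₀))
    {T : ℝ} (hT : x₀ < T) {s₀ : ℝ} (hTs₀ : T < s₀) (hs₀ : 0 < h s₀) :
    (∫ t in Set.Ioc x₀ T, φ t * h t) ≤
      φ x₀ * tailInt h x₀ + ∫ s in x₀..T, φ' s * tailInt h s := by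
  have hnn := hlc.1
  have hφc : Continuous φ := by
    rw [continuous_iff_continuousAt]; exact fun p => (hφd p).continuousAt
  have hcont : ContinuousOn h (Set.Ioo w s₀) := lc_continuousOn hlc hwpos hs₀
  have hΘcont : ContinuousOn (fun u => φ u * tailInt h u) (Set.Icc x₀ T) :=
    (hφc.mul (tailInt_continuous hi)).continuousOn
  have hderiv : ∀ p ∈ Set.Ioo x₀ T,
      HasDerivWithinAt (fun u => φ u * tailInt h u)
        (φ' p * tailInt h p + φ p * (-(h p))) (Set.Ioi p) p := by
    intro p hp
    have hmem : p ∈ Set.Ioo w s₀ := ⟨lt_of_le_of_lt hwx hp.1, lt_trans hp.2 hTs₀⟩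
    exact ((hφd p).mul (tailInt_hasDerivAt hi isOpen_Ioo hcont hmem)).hasDerivWithinAt
  have int1 : IntervalIntegrable (fun p => φ' p * tailInt h p) volume x₀ T :=
    (hφ'c.mul (tailInt_continuous hi)).intervalIntegrable x₀ T
  have int2 : IntervalIntegrable (fun p => φ p * h p) volume x₀ T := by
    rw [intervalIntegrable_iff_integrableOn_Ioc_of_le (le_of_lt hT)]
    exact hint.mono_set Set.Ioc_subset_Ioi_self
  have hfint : IntervalIntegrable (fun p => φ' p * tailInt h p + φ p * (-(h p)))
      volume x₀ T := by
    have : (fun p => φ' p * tailInt h p + φ p * (-(h p)))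
        = fun p => φ' p * tailInt h p - φ p * h p := by funext p; ring
    rw [this]
    exact int1.sub int2
  have hFTC := intervalIntegral.integral_eq_sub_of_hasDeriv_right_of_le (le_of_lt hT)
    hΘcont hderiv hfint
  have hsplit : (∫ p in x₀..T, (φ' p * tailInt h p + φ p * (-(h p))))
      = (∫ p in x₀..T, φ' p * tailInt h p) - ∫ p in x₀..T, φ p * h p := by
    have : (fun p => φ' p * tailInt h p + φ p * (-(h p)))
        = fun p => φ' p * tailInt h p - φ p * h p := by funext p; ring
    rw [this, intervalIntegral.integral_sub int1 int2]
  rw [hsplit] at hFTC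
  have hIoc : (∫ t in Set.Ioc x₀ T, φ t * h t) = ∫ p in x₀..T, φ p * h p :=
    (intervalIntegral.integral_of_le (le_of_lt hT)).symm
  have hΘT : 0 ≤ φ T * tailInt h T :=
    mul_nonneg (hφnn T (le_of_lt hT)) (tailInt_nonneg hnn T)
  rw [hIoc]
  linarith [hFTC]

lemma tail_moment_bound {h : ℝ → ℝ} {w : ℝ} (hlc : LogConcaveFn h) (hi : Integrable h)
    (hwpos : 0 < h w) {x₀ : ℝ} (hwx : w ≤ x₀) (φ φ' : ℝ → ℝ)
    (hφd : ∀ p, HasDerivAt φ (φ' p) p) (hφ'c : Continuous φ')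
    (hφnn : ∀ p, x₀ ≤ p → 0 ≤ φ p)
    (hint : IntegrableOn (fun t => φ t * h t) (Set.Ioi x₀))
    {B : ℝ} (hB : ∀ T, x₀ ≤ T → (∫ s in x₀..T, φ' s * tailInt h s) ≤ B) :
    ∫ t in Set.Ioi x₀, φ t * h t ≤ φ x₀ * tailInt h x₀ + B := by
  have hnn := hlc.1
  have hB0 : 0 ≤ B := by
    have := hB x₀ le_rfl
    simpa using this
  have hRHS0 : 0 ≤ φ x₀ * tailInt h x₀ + B :=
    add_nonneg (mul_nonneg (hφnn x₀ le_rfl) (tailInt_nonneg hnn x₀)) hB0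
  have key : ∀ T, x₀ ≤ T → (∃ s₀, T < s₀ ∧ 0 < h s₀) →
      (∫ t in Set.Ioc x₀ T, φ t * h t) ≤ φ x₀ * tailInt h x₀ + B := by
    intro T hT hex
    rcases eq_or_lt_of_le hT with rfl | hT'
    · simpa using hRHS0
    obtain ⟨s₀, hTs₀, hs₀⟩ := hex
    calc (∫ t in Set.Ioc x₀ T, φ t * h t)
        ≤ φ x₀ * tailInt h x₀ + ∫ s in x₀..T, φ' s * tailInt h s :=
          tail_moment_key hlc hi hwpos hwx φ φ' hφd hφ'c hφnn hint hT' hTs₀ hs₀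
      _ ≤ φ x₀ * tailInt h x₀ + B := by linarith [hB T hT]
  set A : Set ℝ := {a | x₀ < a ∧ 0 < h a} with hA
  by_cases hAne : A.Nonempty
  · by_cases hbdd : BddAbove A
    · set b' := sSup A with hb'
      obtain ⟨a₀, ha₀⟩ := id hAne
      have hxb : x₀ < b' := lt_of_lt_of_le ha₀.1 (le_csSup hbdd ha₀)
      have hzero : ∀ s, b' < s → h s = 0 := by
        intro s hs
        by_contra hcon
        have hpos : 0 < h s := lt_of_le_of_ne (hnn s) (Ne.symm hcon)
        have : s ∈ A := ⟨lt_trans hxb hs, hpos⟩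
        exact absurd (le_csSup hbdd this) (not_le.mpr hs)
      have hsplitset : Set.Ioo x₀ b' ∪ Set.Ici b' = Set.Ioi x₀ := Set.Ioo_union_Ici_eq_Ioi hxb
      have hdisj : Disjoint (Set.Ioo x₀ b') (Set.Ici b') := by
        rw [Set.disjoint_left]
        rintro a ⟨_, h1⟩ h2
        exact absurd (Set.mem_Ici.mp h2) (not_le.mpr h1)
      have hIci : (∫ t in Set.Ici b', φ t * h t) = 0 := by
        rw [integral_Ici_eq_integral_Ioi,
          setIntegral_congr_fun measurableSet_Ioi
            (fun t ht => by show φ t * h t = 0; rw [hzero t ht, mul_zero] : Set.EqOn (fun t => φ t * h t)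
              (fun _ => (0:ℝ)) (Set.Ioi b'))]
        simp
      have hsplitint : (∫ t in Set.Ioi x₀, φ t * h t) = ∫ t in Set.Ioo x₀ b', φ t * h t := by
        rw [← hsplitset, setIntegral_union hdisj measurableSet_Ici
          (hint.mono_set (by rw [← hsplitset]; exact Set.subset_union_left))
          (hint.mono_set (by rw [← hsplitset]; exact Set.subset_union_right)), hIci, add_zero]
      set Tn : ℕ → ℝ := fun n => b' - (b' - x₀) / (n + 1) with hTn
      have hTnlt : ∀ n, Tn n < b' := by
        intro n
        have : 0 < (b' - x₀) / ((n:ℝ) + 1) := div_pos (by linarith) (by positivity)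
        simp only [hTn]; linarith
      have hTnge : ∀ n, x₀ ≤ Tn n := by
        intro n
        have h1 : (b' - x₀) / ((n:ℝ) + 1) ≤ (b' - x₀) / 1 := by
          apply div_le_div_of_nonneg_left (by linarith) one_pos
          · linarith [Nat.cast_nonneg (α := ℝ) n]
        simp only [hTn]; rw [div_one] at h1; linarith
      have hmono : Monotone fun n : ℕ => Set.Ioc x₀ (Tn n) := by
        intro m n hmn
        apply Set.Ioc_subset_Ioc le_rfl
        have : (b' - x₀) / ((n:ℝ) + 1) ≤ (b' - x₀) / ((m:ℝ) + 1) := by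
          apply div_le_div_of_nonneg_left (by linarith) (by positivity)
          have : (m:ℝ) ≤ n := Nat.cast_le.mpr hmn
          linarith
        simp only [hTn]; linarith
      have hunion : (⋃ n : ℕ, Set.Ioc x₀ (Tn n)) = Set.Ioo x₀ b' := by
        ext t
        simp only [Set.mem_iUnion, Set.mem_Ioc, Set.mem_Ioo]
        constructor
        · rintro ⟨n, h1, h2⟩
          exact ⟨h1, lt_of_le_of_lt h2 (hTnlt n)⟩
        · rintro ⟨h1, h2⟩
          obtain ⟨n, hn⟩ := exists_nat_ge ((b' - x₀) / (b' - t))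
          refine ⟨n, h1, ?_⟩
          have hbt : 0 < b' - t := by linarith
          have h3 : (b' - x₀) / (b' - t) ≤ (n:ℝ) + 1 := by linarith
          have h4 : (b' - x₀) ≤ ((n:ℝ) + 1) * (b' - t) := by
            rw [div_le_iff₀ hbt] at h3; linarith
          have h5 : (b' - x₀) / ((n:ℝ) + 1) ≤ b' - t := by
            rw [div_le_iff₀ (by positivity : (0:ℝ) < (n:ℝ) + 1)]; linarith
          simp only [hTn]; linarith
      have htend := tendsto_setIntegral_of_monotone (fun n => measurableSet_Ioc) hmono
        (by rw [hunion]; exact hint.mono_set Set.Ioo_subset_Ioi_self)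
      rw [hunion] at htend
      rw [hsplitint]
      refine le_of_tendsto' htend fun n => ?_
      apply key (Tn n) (hTnge n)
      obtain ⟨a, haA, hlt⟩ := exists_lt_of_lt_csSup hAne (hTnlt n)
      exact ⟨a, hlt, haA.2⟩
    · have hTall : ∀ n : ℕ, (∫ t in Set.Ioc x₀ (x₀ + n), φ t * h t)
          ≤ φ x₀ * tailInt h x₀ + B := by
        intro n
        obtain ⟨a, haA, hlt⟩ := not_bddAbove_iff.mp hbdd (x₀ + n)
        exact key (x₀ + n) (by linarith [Nat.cast_nonneg (α := ℝ) n]) ⟨a, hlt, haA.2⟩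
      have hmono : Monotone fun n : ℕ => Set.Ioc x₀ (x₀ + (n:ℝ)) := by
        intro m n hmn
        apply Set.Ioc_subset_Ioc le_rfl
        have : (m:ℝ) ≤ n := Nat.cast_le.mpr hmn
        linarith
      have hunion : (⋃ n : ℕ, Set.Ioc x₀ (x₀ + (n:ℝ))) = Set.Ioi x₀ := by
        ext t
        simp only [Set.mem_iUnion, Set.mem_Ioc, Set.mem_Ioi]
        constructor
        · rintro ⟨n, h1, _⟩; exact h1
        · intro h1
          obtain ⟨n, hn⟩ := exists_nat_ge (t - x₀)
          exact ⟨n, h1, by linarith⟩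
      have htend := tendsto_setIntegral_of_monotone (fun n => measurableSet_Ioc) hmono
        (by rw [hunion]; exact hint)
      rw [hunion] at htend
      exact le_of_tendsto' htend hTall
  · have hz : ∀ t ∈ Set.Ioi x₀, φ t * h t = 0 := by
      intro t ht
      have : h t = 0 := by
        by_contra hcon
        exact hAne ⟨t, Set.mem_Ioi.mp ht, lt_of_le_of_ne (hnn t) (Ne.symm hcon)⟩
      rw [this, mul_zero]
    rw [setIntegral_congr_fun measurableSet_Ioi hz]
    simpa using hRHS0

lemma hasDerivAt_exp_affine (α β s : ℝ) :
    HasDerivAt (fun u => Real.exp (α * u + β)) (α * Real.exp (α * s + β)) s := by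
  have h1 : HasDerivAt (fun u : ℝ => α * u + β) α s := by
    simpa using ((hasDerivAt_id s).const_mul α).add_const β
  have := (Real.hasDerivAt_exp (α * s + β)).comp s h1
  simpa [Function.comp_def, mul_comm] using this

lemma tail_first_moment {h : ℝ → ℝ} {w : ℝ} (hlc : LogConcaveFn h) (hi : Integrable h)
    (hwpos : 0 < h w) (hGw : tailInt h w = 1 / 2)
    (hint : IntegrableOn (fun t => (t - w) * h t) (Set.Ioi w)) :
    (∫ t in Set.Ioi w, (t - w) * h t) ≤ 1 / (4 * h w) := by
  set c := 2 * h w with hcdef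
  have hc : 0 < c := by positivity
  have hB : ∀ T, w ≤ T → (∫ s in w..T, (1:ℝ) * tailInt h s) ≤ 1 / (4 * h w) := by
    intro T hT
    have hEd : ∀ s, HasDerivAt (fun u => -(1/(2*c)) * Real.exp ((-c) * u + c * w))
        ((1/2) * Real.exp ((-c) * s + c * w)) s := by
      intro s
      have := (hasDerivAt_exp_affine (-c) (c * w) s).const_mul (-(1/(2*c)))
      refine this.congr_deriv ?_
      field_simp
    have hmono : (∫ s in w..T, (1:ℝ) * tailInt h s)
        ≤ ∫ s in w..T, (1/2) * Real.exp ((-c) * s + c * w) := by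
      apply intervalIntegral.integral_mono_on hT
      · exact (continuous_const.mul (tailInt_continuous hi)).intervalIntegrable w T
      · exact (continuous_const.mul (Real.continuous_exp.comp (by continuity))).intervalIntegrable w T
      · intro s hs
        have hbd := tail_exp_bound hlc hi hwpos hGw le_rfl hs.1
        rw [hGw] at hbd
        rw [one_mul, show (-c) * s + c * w = -(2 * h w) * (s - w) by rw [hcdef]; ring]
        exact hbd
    have hval : (∫ s in w..T, (1/2) * Real.exp ((-c) * s + c * w)) ≤ 1 / (4 * h w) := by
      rw [intervalIntegral.integral_eq_sub_of_hasDerivAt (fun s _ => hEd s)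
        ((continuous_const.mul (Real.continuous_exp.comp (by continuity))).intervalIntegrable w T)]
      have h1 : Real.exp ((-c) * w + c * w) = 1 := by
        rw [show (-c) * w + c * w = 0 by ring, Real.exp_zero]
      rw [h1]
      have h2 : 0 < Real.exp ((-c) * T + c * w) := Real.exp_pos _
      have h3 : (0:ℝ) < 1/(2*c) := by positivity
      have h4 : 1 / (4 * h w) = 1/(2*c) := by rw [hcdef]; ring
      rw [h4]
      nlinarith
    linarith
  have := tail_moment_bound hlc hi hwpos le_rfl (fun t => t - w) (fun _ => 1)
    (fun p => (hasDerivAt_id p).sub_const w) continuous_const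
    (fun p hp => by show (0:ℝ) ≤ p - w; linarith) hint hB
  simpa using this

lemma tail_second_moment {h : ℝ → ℝ} {w x d : ℝ} (hlc : LogConcaveFn h) (hi : Integrable h)
    (hwpos : 0 < h w) (hGw : tailInt h w = 1 / 2) (hwx : w < x) (hd : 0 < d)
    (hint : IntegrableOn (fun t => (t - w + d)^2 * h t) (Set.Ioi x)) :
    (∫ t in Set.Ioi x, (t - w + d)^2 * h t) ≤
      tailInt h x * ((x - w + d)^2 + 2*(x - w + d)/(2 * h w) + 2/(2 * h w)^2) := by
  have hnn := hlc.1
  set c := 2 * h w with hcdef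
  have hc : 0 < c := by positivity
  set ν' := tailInt h x with hν'def
  have hν'0 : 0 ≤ ν' := tailInt_nonneg hnn x
  have hB : ∀ T, x ≤ T → (∫ s in x..T, (2*(s - w + d)) * tailInt h s)
      ≤ ν' * (2*(x - w + d)/c + 2/c^2) := by
    intro T hT
    have hcont1 : Continuous fun s => (2*(s - w + d)) * tailInt h s :=
      (by continuity : Continuous fun s : ℝ => 2*(s - w + d)).mul (tailInt_continuous hi)
    have hcont2 : Continuous fun s => (2*(s - w + d)) * (ν' * Real.exp ((-c) * s + c * x)) :=
      (by continuity : Continuous fun s : ℝ => 2*(s - w + d)).mul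
        (continuous_const.mul (Real.continuous_exp.comp (by continuity)))
    have hmono : (∫ s in x..T, (2*(s - w + d)) * tailInt h s)
        ≤ ∫ s in x..T, (2*(s - w + d)) * (ν' * Real.exp ((-c) * s + c * x)) := by
      apply intervalIntegral.integral_mono_on hT (hcont1.intervalIntegrable x T)
        (hcont2.intervalIntegrable x T)
      intro s hs
      have hbd := tail_exp_bound hlc hi hwpos hGw (le_of_lt hwx) hs.1
      rw [show -(2 * h w) * (s - x) = (-c) * s + c * x by rw [hcdef]; ring] at hbd
      have hfac : 0 ≤ 2*(s - w + d) := by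
        have := hs.1
        nlinarith
      exact mul_le_mul_of_nonneg_left hbd hfac
    have hEd : ∀ s, HasDerivAt
        (fun u => -ν' * Real.exp ((-c) * u + c * x) * (2*(u - w + d)/c + 2/c^2))
        ((2*(s - w + d)) * (ν' * Real.exp ((-c) * s + c * x))) s := by
      intro s
      have h1 : HasDerivAt (fun u => -ν' * Real.exp ((-c) * u + c * x))
          (-ν' * ((-c) * Real.exp ((-c) * s + c * x))) s :=
        (hasDerivAt_exp_affine (-c) (c * x) s).const_mul (-ν')
      have h2 : HasDerivAt (fun u : ℝ => 2*(u - w + d)/c + 2/c^2) (2/c) s := by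
        have h2' := ((((hasDerivAt_id s).sub_const w).add_const d).const_mul (2/c)).add_const (2/c^2)
        have he : (fun u : ℝ => 2/c * (id u - w + d) + 2/c^2)
            = fun u : ℝ => 2*(u - w + d)/c + 2/c^2 := by
          funext u; simp only [id]; ring
        rw [he] at h2'
        simpa using h2'
      have := h1.mul h2
      refine this.congr_deriv ?_
      have hcne : c ≠ 0 := ne_of_gt hc
      field_simp
      ring
    have hval : (∫ s in x..T, (2*(s - w + d)) * (ν' * Real.exp ((-c) * s + c * x)))
        = (-ν' * Real.exp ((-c) * T + c * x) * (2*(T - w + d)/c + 2/c^2))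
          - (-ν' * Real.exp ((-c) * x + c * x) * (2*(x - w + d)/c + 2/c^2)) :=
      intervalIntegral.integral_eq_sub_of_hasDerivAt (fun s _ => hEd s)
        (hcont2.intervalIntegrable x T)
    have hET : -ν' * Real.exp ((-c) * T + c * x) * (2*(T - w + d)/c + 2/c^2) ≤ 0 := by
      have h2 : 0 < Real.exp ((-c) * T + c * x) := Real.exp_pos _
      have h3 : 0 ≤ 2*(T - w + d)/c + 2/c^2 := by
        have : 0 ≤ T - w + d := by nlinarith
        positivity
      have h4 : 0 ≤ ν' * Real.exp ((-c) * T + c * x) * (2*(T - w + d)/c + 2/c^2) := by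
        positivity
      nlinarith
    have hEx : Real.exp ((-c) * x + c * x) = 1 := by
      rw [show (-c) * x + c * x = 0 by ring, Real.exp_zero]
    rw [hEx] at hval
    calc (∫ s in x..T, (2*(s - w + d)) * tailInt h s)
        ≤ ∫ s in x..T, (2*(s - w + d)) * (ν' * Real.exp ((-c) * s + c * x)) := hmono
      _ ≤ ν' * (2*(x - w + d)/c + 2/c^2) := by rw [hval]; nlinarith
  have hφd : ∀ p : ℝ, HasDerivAt (fun t => (t - w + d)^2) (2*(p - w + d)) p := by
    intro p
    have h0 := (((hasDerivAt_id p).sub_const w).add_const d).pow 2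
    norm_num at h0
    exact h0.congr_deriv rfl
  have := tail_moment_bound hlc hi hwpos (le_of_lt hwx) (fun t => (t - w + d)^2)
    (fun s => 2*(s - w + d)) hφd (by continuity)
    (fun p hp => sq_nonneg _) hint hB
  calc (∫ t in Set.Ioi x, (t - w + d)^2 * h t)
      ≤ (x - w + d)^2 * tailInt h x + ν' * (2*(x - w + d)/c + 2/c^2) := this
    _ = tailInt h x * ((x - w + d)^2 + 2*(x - w + d)/(2 * h w) + 2/(2 * h w)^2) := by
        rw [← hcdef, ← hν'def]; ring

lemma reflect_logconcave {h : ℝ → ℝ} (hlc : LogConcaveFn h) (a : ℝ) :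
    LogConcaveFn (fun t => h (a - t)) := by
  refine ⟨fun t => hlc.1 _, fun p q l hl0 hl1 => ?_⟩
  have := hlc.2 (a - p) (a - q) l hl0 hl1
  rw [show (1 - l) * (a - p) + l * (a - q) = a - ((1 - l) * p + l * q) by ring] at this
  exact this

lemma left_first_moment {h : ℝ → ℝ} {w : ℝ} (hlc : LogConcaveFn h) (hi : Integrable h)
    (hwpos : 0 < h w) (hFw : ∫ t in Set.Iic w, h t = 1 / 2)
    (hint : Integrable (fun t => (w - t) * h t)) :
    (∫ t in Set.Iic w, (w - t) * h t) ≤ 1 / (4 * h w) := by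
  set g : ℝ → ℝ := fun t => h (2 * w - t) with hgdef
  have glc : LogConcaveFn g := reflect_logconcave hlc (2 * w)
  have gi : Integrable g := integrable_comp_reflect hi (2 * w)
  have gw : g w = h w := by
    show h (2 * w - w) = h w
    congr 1
    ring
  have gGw : tailInt g w = 1 / 2 := by
    rw [tailInt]
    calc (∫ t in Set.Ioi w, g t)
        = ∫ t in Set.Ioi w, h (2 * w + -t) := by
          apply setIntegral_congr_fun measurableSet_Ioi
          intro t _
          show h (2 * w - t) = h (2 * w + -t)
          rw [sub_eq_add_neg]
      _ = ∫ u in Set.Iic (-w), h (2 * w + u) := integral_comp_neg_Ioi w (fun u => h (2 * w + u))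
      _ = ∫ u in Set.Iic (-w), h (u + 2 * w) := by
          apply setIntegral_congr_fun measurableSet_Iic
          intro u _
          show h (2 * w + u) = h (u + 2 * w)
          rw [add_comm]
      _ = ∫ u in Set.Iic (-w + 2 * w), h u := integral_Iic_comp_add h (-w) (2 * w)
      _ = 1 / 2 := by rw [show -w + 2 * w = w by ring]; exact hFw
  have gmint : IntegrableOn (fun t => (t - w) * g t) (Set.Ioi w) := by
    have h1 : Integrable (fun t => (w - (2 * w - t)) * h (2 * w - t)) :=
      integrable_comp_reflect hint (2 * w)
    have h2 : (fun t => (w - (2 * w - t)) * h (2 * w - t)) = fun t => (t - w) * g t := by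
      funext t
      congr 1
      ring
    rw [h2] at h1
    exact h1.integrableOn
  have hbound := tail_first_moment glc gi (by rw [gw]; exact hwpos) gGw gmint
  rw [gw] at hbound
  have e3 : (∫ t in Set.Ioi w, (t - w) * g t)
      = ∫ s in Set.Iic w, (w - s) * h s := by
    calc (∫ t in Set.Ioi w, (t - w) * g t)
        = ∫ t in Set.Ioi w, (-w - -t) * h (2 * w + -t) := by
          apply setIntegral_congr_fun measurableSet_Ioi
          intro t _
          show (t - w) * h (2 * w - t) = (-w - -t) * h (2 * w + -t)
          rw [show (2:ℝ) * w + -t = 2 * w - t by ring]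
          congr 1
          ring
      _ = ∫ u in Set.Iic (-w), (-w - u) * h (2 * w + u) :=
          integral_comp_neg_Ioi w (fun u => (-w - u) * h (2 * w + u))
      _ = ∫ u in Set.Iic (-w), (w - (u + 2 * w)) * h (u + 2 * w) := by
          apply setIntegral_congr_fun measurableSet_Iic
          intro u _
          show (-w - u) * h (2 * w + u) = (w - (u + 2 * w)) * h (u + 2 * w)
          rw [show (2:ℝ) * w + u = u + 2 * w by ring]
          congr 1
          ring
      _ = ∫ u in Set.Iic (-w + 2 * w), (w - u) * h u :=
          integral_Iic_comp_add (fun s => (w - s) * h s) (-w) (2 * w)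
      _ = ∫ s in Set.Iic w, (w - s) * h s := by rw [show -w + 2 * w = w by ring]
  rw [e3] at hbound
  exact hbound

lemma arith_lemma {c ν A l2 a : ℝ} (hc : 0 < c) (hν : 0 < ν) (hA1 : 1 ≤ A)
    (hl2 : 0.6931 < l2) (hu0 : 0 ≤ c * a) (hca : c * a ≤ A) :
    ν * ((a + 1/c)^2 + 2*(a + 1/c)/c + 2/c^2) ≤ 5 * ν / c^2 * (A + l2)^2 := by
  have h2 : (a + 1/c)^2 + 2*(a + 1/c)/c + 2/c^2 = ((c*a + 1)^2 + 2*(c*a + 1) + 2)/c^2 := by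
    field_simp
  have hkey : (c*a + 1)^2 + 2*(c*a + 1) + 2 ≤ 5*(A + l2)^2 := by
    nlinarith [mul_nonneg (sub_nonneg.mpr hca) (add_nonneg hu0 (by linarith : (0:ℝ) ≤ A)),
      sq_nonneg (l2 - 0.6931), mul_nonneg (by linarith : (0:ℝ) ≤ A - 1) (by linarith : (0:ℝ) ≤ l2),
      sq_nonneg (A - 1)]
  calc ν * ((a + 1/c)^2 + 2*(a + 1/c)/c + 2/c^2)
      = ν * (((c*a + 1)^2 + 2*(c*a + 1) + 2)/c^2) := by rw [h2]
    _ ≤ ν * ((5*(A + l2)^2)/c^2) := by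
        gcongr
    _ = 5 * ν / c^2 * (A + l2)^2 := by ring

theorem logconcave_sq_moment_tail
    (h : ℝ → ℝ) (hlc : LogConcaveFn h)
    (hi : Integrable h) (h1 : ∫ x, h x = 1)
    (w μ : ℝ) (hw : ∫ x in Set.Iic w, h x = 1 / 2) (hwpos : 0 < h w)
    (hmi : Integrable (fun t => t * h t))
    (hμ : μ = ∫ t, t * h t)
    (x ν : ℝ) (hν : ∫ t in Set.Ioi x, h t = ν)
    (hνpos : 0 < ν) (hνlt : ν < 1 / 6) :
    ∫ t in Set.Ioi x, (t - μ) ^ 2 * h t ≤ 5 * ν / (4 * h w ^ 2) * (Real.log ν) ^ 2 := by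
  have hnn := hlc.1
  have hRHSnn : 0 ≤ 5 * ν / (4 * h w ^ 2) * (Real.log ν) ^ 2 := by positivity
  by_cases hInt : IntegrableOn (fun t => (t - μ) ^ 2 * h t) (Set.Ioi x)
  swap
  · rw [integral_undef hInt]
    exact hRHSnn
  have hwhalf : tailInt h w = 1 / 2 := by
    have hsplit := integral_add_compl (measurableSet_Iic (a := w)) hi
    rw [Set.compl_Iic, hw, h1] at hsplit
    rw [tailInt]
    linarith
  have hνx : tailInt h x = ν := hν
  have hc : 0 < 2 * h w := by positivity
  have hwx : w < x := by
    by_contra hcon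
    push_neg at hcon
    have h1' := tailInt_anti hi hnn hcon
    rw [hwhalf, hνx] at h1'
    linarith
  have hμint : Integrable (fun t => (t - w) * h t) := by
    have he : (fun t => (t - w) * h t) = fun t => t * h t - w * h t := by
      funext t; ring
    rw [he]
    exact hmi.sub (hi.const_mul w)
  have hμw : μ - w = ∫ t, (t - w) * h t := by
    have he : (fun t => (t - w) * h t) = fun t => t * h t - w * h t := by
      funext t; ring
    rw [he, integral_sub hmi (hi.const_mul w), integral_const_mul, h1, ← hμ]
    ring
  have habsint : Integrable (fun t => |t - w| * h t) := by
    have h2 := hμint.abs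
    have he : (fun t => |(t - w) * h t|) = fun t => |t - w| * h t := by
      funext t; rw [abs_mul, abs_of_nonneg (hnn t)]
    rwa [he] at h2
  have hleft : (∫ t in Set.Iic w, |t - w| * h t) ≤ 1 / (4 * h w) := by
    have he : (∫ t in Set.Iic w, |t - w| * h t) = ∫ t in Set.Iic w, (w - t) * h t := by
      apply setIntegral_congr_fun measurableSet_Iic
      intro t ht
      have htw : t ≤ w := ht
      show |t - w| * h t = (w - t) * h t
      rw [abs_of_nonpos (by linarith)]
      ring_nf
    rw [he]
    apply left_first_moment hlc hi hwpos hw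
    have he2 : (fun t => (w - t) * h t) = fun t => -((t - w) * h t) := by
      funext t; ring
    rw [he2]
    exact hμint.neg
  have hright : (∫ t in Set.Ioi w, |t - w| * h t) ≤ 1 / (4 * h w) := by
    have he : (∫ t in Set.Ioi w, |t - w| * h t) = ∫ t in Set.Ioi w, (t - w) * h t := by
      apply setIntegral_congr_fun measurableSet_Ioi
      intro t ht
      have htw : w < t := ht
      show |t - w| * h t = (t - w) * h t
      rw [abs_of_nonneg (by linarith)]
    rw [he]
    exact tail_first_moment hlc hi hwpos hwhalf hμint.integrableOn
  have habs : |μ - w| ≤ 1 / (2 * h w) := by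
    calc |μ - w| = |∫ t, (t - w) * h t| := by rw [hμw]
      _ ≤ ∫ t, |(t - w) * h t| := by
          have hni := norm_integral_le_integral_norm (μ := volume) (fun t => (t - w) * h t)
          simpa only [Real.norm_eq_abs] using hni
      _ = ∫ t, |t - w| * h t := by
          congr 1; funext t; rw [abs_mul, abs_of_nonneg (hnn t)]
      _ = (∫ t in Set.Iic w, |t - w| * h t) + ∫ t in Set.Ioi w, |t - w| * h t := by
          rw [← integral_add_compl (measurableSet_Iic (a := w)) habsint, Set.compl_Iic]
      _ ≤ 1 / (4 * h w) + 1 / (4 * h w) := add_le_add hleft hright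
      _ = 1 / (2 * h w) := by ring
  have hd : 0 < 1 / (2 * h w) := by positivity
  have hptint : IntegrableOn (fun t => (t - w + 1 / (2 * h w)) ^ 2 * h t) (Set.Ioi x) := by
    have he : (fun t => (t - w + 1 / (2 * h w)) ^ 2 * h t)
        = fun t => (t - μ) ^ 2 * h t + ((2 * (1 / (2 * h w) - w + μ)) * (t * h t)
            + ((1 / (2 * h w) - w) ^ 2 - μ ^ 2) * h t) := by
      funext t; ring
    rw [he]
    exact hInt.add (((hmi.const_mul _).add (hi.const_mul _)).integrableOn)
  have hcomp : (∫ t in Set.Ioi x, (t - μ) ^ 2 * h t)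
      ≤ ∫ t in Set.Ioi x, (t - w + 1 / (2 * h w)) ^ 2 * h t := by
    apply setIntegral_mono_on hInt hptint measurableSet_Ioi
    intro t ht
    have htx : x < t := ht
    obtain ⟨hm1, hm2⟩ := abs_le.mp habs
    have h1' : |t - μ| ≤ t - w + 1 / (2 * h w) := by
      rw [abs_le]
      constructor <;> linarith
    have h2' : (t - μ) ^ 2 ≤ (t - w + 1 / (2 * h w)) ^ 2 := by
      calc (t - μ) ^ 2 = |t - μ| ^ 2 := (sq_abs _).symm
        _ ≤ (t - w + 1 / (2 * h w)) ^ 2 := by nlinarith [abs_nonneg (t - μ)]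
    exact mul_le_mul_of_nonneg_right h2' (hnn t)
  have hmain := tail_second_moment hlc hi hwpos hwhalf hwx hd hptint
  rw [hνx] at hmain
  have hbA := tail_exp_bound hlc hi hwpos hwhalf (le_refl w) (le_of_lt hwx) (t := x)
  rw [hwhalf, hνx] at hbA
  have hca : 2 * h w * (x - w) ≤ -Real.log (2 * ν) := by
    have h2ν : (0:ℝ) < 2 * ν := by linarith
    have hexp : 2 * ν ≤ Real.exp (-(2 * h w) * (x - w)) := by linarith
    have hle := (Real.log_le_iff_le_exp h2ν).mpr hexp
    linarith
  have hA1 : 1 ≤ -Real.log (2 * ν) := by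
    have h2ν : (0:ℝ) < 2 * ν := by linarith
    have hlt : Real.log (2 * ν) < Real.log (1 / 3) :=
      Real.log_lt_log h2ν (by linarith)
    have hlog3 : 1 ≤ Real.log 3 := by
      rw [Real.le_log_iff_exp_le (by norm_num)]
      exact le_of_lt (lt_trans Real.exp_one_lt_d9 (by norm_num))
    have hinv : Real.log (1 / 3) = -Real.log 3 := by
      rw [one_div, Real.log_inv]
    linarith
  have hlogν : Real.log ν = -(-Real.log (2 * ν) + Real.log 2) := by
    have hmul : Real.log (2 * ν) = Real.log 2 + Real.log ν :=
      Real.log_mul (by norm_num) (ne_of_gt hνpos)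
    linarith
  have hu0 : 0 ≤ 2 * h w * (x - w) := by nlinarith
  have hl2 : (0.6931:ℝ) < Real.log 2 := by linarith [Real.log_two_gt_d9]
  have harith := arith_lemma hc hνpos hA1 hl2 hu0 hca (a := x - w)
  have hrhseq : 5 * ν / (4 * h w ^ 2) * (Real.log ν) ^ 2
      = 5 * ν / (2 * h w)^2 * (-Real.log (2 * ν) + Real.log 2)^2 := by
    rw [hlogν]
    ring
  calc (∫ t in Set.Ioi x, (t - μ) ^ 2 * h t)
      ≤ ∫ t in Set.Ioi x, (t - w + 1 / (2 * h w)) ^ 2 * h t := hcomp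
    _ ≤ ν * ((x - w + 1 / (2 * h w)) ^ 2 + 2 * (x - w + 1 / (2 * h w)) / (2 * h w)
          + 2 / (2 * h w) ^ 2) := hmain
    _ ≤ 5 * ν / (2 * h w)^2 * (-Real.log (2 * ν) + Real.log 2)^2 := harith
    _ = 5 * ν / (4 * h w ^ 2) * (Real.log ν) ^ 2 := hrhseq.symm
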